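/- Let (X,d) be a metric space, let Ω ⊂ X be nonempty open with X∖Ω ≠ ∅, and let λ ≥ 1. Let x_j, x_i ∈ Ω and set r_j := dist(x_j, X∖Ω)/(100λ) and r_i := dist(x_i, X∖Ω)/(100λ). Suppose x ∈ B(x_j, r_j), y ∈ B(x_i, r_i), dist(x, X∖Ω) ≤ dist(y, X∖Ω), and d(x,y) ≤ dist(x, X∖Ω)/(50λ). Then y ∈ B(x_j, 4r_j); in particular B(x_i, 20λr_i) ∩ B(x_j, 20λr_j) ≠ ∅. If moreover r_i ≤ 2r_j, then B(x_i, r_i) ⊂ B(x_j, 10r_j). -/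

import Mathlib

open Metric

/-- The key geometric step for Whitney coverings: if
`r_j = dist(x_j, X∖Ω)/(100 lam)`, `r_i = dist(x_i, X∖Ω)/(100 lam)`, `x ∈ B(x_j,r_j)`,
`y ∈ B(x_i,r_i)`, `dist(x,X∖Ω) ≤ dist(y,X∖Ω)` and `d(x,y) ≤ dist(x,X∖Ω)/(50 lam)`,
then `y ∈ B(x_j,4r_j)`, hence `B(x_i,20 lam r_i)` meets `B(x_j,20 lam r_j)`; and if
moreover `r_i ≤ 2 r_j` then `B(x_i,r_i) ⊆ B(x_j,10 r_j)`. -/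
theorem whitney_ball_chain {X : Type*} [MetricSpace X] (Ω : Set X)
    (hΩ : IsOpen Ω) (hne : Ω.Nonempty) (hcne : Ωᶜ.Nonempty)
    (lam : ℝ) (hlam : 1 ≤ lam)
    (xj xi : X) (hxj : xj ∈ Ω) (hxi : xi ∈ Ω)
    (rj ri : ℝ)
    (hrj : rj = infDist xj Ωᶜ / (100 * lam))
    (hri : ri = infDist xi Ωᶜ / (100 * lam))
    (x y : X) (hx : x ∈ ball xj rj) (hy : y ∈ ball xi ri)
    (hdd : infDist x Ωᶜ ≤ infDist y Ωᶜ)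
    (hxy : dist x y ≤ infDist x Ωᶜ / (50 * lam)) :
    y ∈ ball xj (4 * rj) ∧
    (ball xi (20 * lam * ri) ∩ ball xj (20 * lam * rj)).Nonempty ∧
    (ri ≤ 2 * rj → ball xi ri ⊆ ball xj (10 * rj)) := by
  have hl : (0:ℝ) < lam := lt_of_lt_of_le one_pos hlam
  have hcl : IsClosed Ωᶜ := hΩ.isClosed_compl
  have hDj : 0 < infDist xj Ωᶜ :=
    (hcl.notMem_iff_infDist_pos hcne).mp (by simpa using hxj)
  have hDi : 0 < infDist xi Ωᶜ :=
    (hcl.notMem_iff_infDist_pos hcne).mp (by simpa using hxi)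
  have hrjpos : 0 < rj := by rw [hrj]; positivity
  have hripos : 0 < ri := by rw [hri]; positivity
  rw [mem_ball] at hx hy
  -- upper bound on infDist x
  have hDx : infDist x Ωᶜ ≤ infDist xj Ωᶜ + dist x xj := infDist_le_infDist_add_dist
  have h1 : dist y xj < 4 * rj := by
    have htri : dist y xj ≤ dist x y + dist x xj := by
      rw [dist_comm x y]; exact dist_triangle y x xj
    have hxy' : dist x y ≤ (infDist xj Ωᶜ + rj) / (50 * lam) := by
      refine hxy.trans (div_le_div_of_nonneg_right ?_ (by positivity))
      · exact hDx.trans (by linarith)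
    have : dist y xj < (infDist xj Ωᶜ + rj) / (50 * lam) + rj := by linarith
    refine this.trans_le ?_
    rw [hrj]
    have h50 : (0:ℝ) < 50 * lam := by positivity
    have h100 : (0:ℝ) < 100 * lam := by positivity
    rw [div_add_div _ _ h50.ne' h100.ne', div_le_iff₀ (mul_pos h50 h100)]
    field_simp
    nlinarith [sq_nonneg lam, mul_pos hDj hl, mul_pos (mul_pos hDj hl) hl]
  refine ⟨mem_ball.mpr h1, ⟨y, ?_, ?_⟩, ?_⟩
  · exact mem_ball.mpr (hy.trans_le (by nlinarith))
  · exact mem_ball.mpr (h1.trans_le (by nlinarith))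
  · intro hle z hz
    rw [mem_ball] at hz ⊢
    have : dist z xj ≤ dist z xi + dist xi y + dist y xj := dist_triangle4 z xi y xj
    have hiy : dist xi y < ri := by rwa [dist_comm]
    linarith
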